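/- Let G be a finite p-group with Z(G) ≤ Φ(G). Then the ring Hom(G, Z(G)) is right p-nil: whenever h ∈ Hom(G, Z(G)) satisfies ph = 0, the composition k·h = h ∘ k is zero for all k ∈ Hom(G, Z(G)). -/

import Mathlib

/-- A subgroup of prime index is a coatom (maximal subgroup). -/
lemma isCoatom_of_index_prime' {G : Type*} [Group G] {p : ℕ} (hp : p.Prime)
    {K : Subgroup G} (hK : K.index = p) : IsCoatom K := by
  constructor
  · intro htop
    rw [htop, Subgroup.index_top] at hK
    exact hp.one_lt.ne' hK.symm
  · intro H hKH
    have hle : K ≤ H := hKH.le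
    have hmul := Subgroup.relIndex_mul_index hle
    rw [hK] at hmul
    have hdvd : H.index ∣ p := Dvd.intro_left _ hmul
    rcases (Nat.Prime.eq_one_or_self_of_dvd hp _ hdvd) with h1 | hps
    · exact Subgroup.index_eq_one.mp h1
    · exfalso
      rw [hps] at hmul
      have hone : K.relIndex H = 1 := by
        have hp0 : 0 < p := hp.pos
        nlinarith [Nat.one_le_iff_ne_zero.mpr (show K.relIndex H ≠ 0 from by
          intro h0; rw [h0] at hmul; simpa [hp.ne_zero] using hmul.symm)]
      exact hKH.ne (le_antisymm hle (Subgroup.relIndex_eq_one.mp hone))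

/-- In a commutative group of exponent `p`, every nontrivial element is detected by a
homomorphism to `ZMod p`. -/
lemma exp_p_exists_char {p : ℕ} (hp : p.Prime) {A : Type*} [CommGroup A]
    (hA : ∀ x : A, x ^ p = 1) {a : A} (ha : a ≠ 1) :
    ∃ φ : A →* Multiplicative (ZMod p), φ a ≠ 1 := by
  haveI : Fact p.Prime := ⟨hp⟩
  obtain ⟨_⟩ : Nonempty (Module (ZMod p) (Additive A)) := ⟨AddCommGroup.zmodModule (by
    intro x
    show Additive.ofMul (x.toMul ^ p) = 0
    rw [hA]; rfl)⟩
  letI : Module.Free (ZMod p) (Additive A) := Module.Free.of_divisionRing (ZMod p) (Additive A)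
  letI : Module.Projective (ZMod p) (Additive A) :=
    @Module.Projective.of_free (ZMod p) _ (Additive A) _ _ ‹_›
  have ha0 : (Additive.ofMul a : Additive A) ≠ 0 := ha
  have key := Module.forall_dual_apply_eq_zero_iff (V := Additive A) (ZMod p)
    (Additive.ofMul a)
  obtain ⟨φ, hφ⟩ := not_forall.mp (fun hall => ha0 (key.mp hall))
  refine ⟨MonoidHom.mk' (fun x => Multiplicative.ofAdd (φ.toAddMonoidHom (Additive.ofMul x))) ?_,
    hφ⟩
  intro y z
  show Multiplicative.ofAdd (φ.toAddMonoidHom (Additive.ofMul y + Additive.ofMul z)) = _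
  rw [map_add]
  rfl

theorem hom_center_right_pnil {p : ℕ} (hp : p.Prime) {G : Type*} [Group G] [Finite G]
    (hG : IsPGroup p G) (hZ : Subgroup.center G ≤ frattini G) :
    ∀ h k : G →* Subgroup.center G, (∀ x : G, (h x) ^ p = 1) →
      ∀ x : G, h ((k x : G)) = 1 := by
  intro h k hhp x
  suffices hker : frattini G ≤ h.ker by exact hker (hZ (k x).2)
  intro g hg
  rw [MonoidHom.mem_ker]
  by_contra hg1
  haveI : NeZero p := ⟨hp.ne_zero⟩
  -- the range of `h` is a commutative group of exponent `p`
  have hA : ∀ z : ↥h.range, z ^ p = 1 := by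
    rintro ⟨z, y, rfl⟩
    ext
    simpa using congrArg Subtype.val (hhp y)
  have ha : h.rangeRestrict g ≠ 1 := by
    intro hcon
    exact hg1 (by simpa using congrArg Subtype.val (congrArg Subtype.val hcon))
  letI : CommGroup ↥h.range := { (inferInstance : Group ↥h.range) with
    mul_comm := fun a b => Subtype.ext (Subtype.ext (Subgroup.mem_center_iff.mp a.1.2 b.1.1).symm) }
  obtain ⟨φ, hφ⟩ := exp_p_exists_char (A := ↥h.range) hp hA ha
  -- the composite `ψ : G →* Multiplicative (ZMod p)` kills `frattini G` but not `g`
  set ψ : G →* Multiplicative (ZMod p) := φ.comp h.rangeRestrict with hψ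
  have hψg : ψ g ≠ 1 := hφ
  haveI : Fact (Nat.card (Multiplicative (ZMod p))).Prime := by
    haveI : Fact p.Prime := ⟨hp⟩
    constructor
    simpa [Nat.card_eq_fintype_card, ZMod.card] using hp
  have hrange : ψ.range = ⊤ := by
    rcases Subgroup.eq_bot_or_eq_top_of_prime_card ψ.range with hbot | htop
    · exact absurd (Subgroup.eq_bot_iff_forall _ |>.mp hbot (ψ g) ⟨g, rfl⟩) hψg
    · exact htop
  have hindex : ψ.ker.index = p := by
    rw [Subgroup.index_ker, hrange, Subgroup.card_top]
    rw [Nat.card_eq_fintype_card, Fintype.card_multiplicative]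
    exact ZMod.card p
  have hco : IsCoatom ψ.ker := isCoatom_of_index_prime' hp hindex
  exact hψg (frattini_le_coatom hco hg)
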